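/- Let M be a finitely generated, cancellative, sharp commutative monoid (i.e. its only unit is 0) whose groupification is torsion-free. Then there exists a monoid homomorphism φ : M → ℕ such that φ(x) = 0 implies x = 0. -/

import Mathlib

variable (M : Type) [AddCancelCommMonoid M]

private def grel : M × M → M × M → Prop := fun p q => p.1 + q.2 = q.1 + p.2

private def gsetoid : Setoid (M × M) where
  r := grel M
  iseqv := by
    constructor
    · intro x; rfl
    · intro x y h; exact h.symm
    · intro x y z h1 h2
      -- x1 + y2 = y1 + x2, y1 + z2 = z1 + y2 ⊢ x1 + z2 = z1 + x2
      have : (x.1 + z.2) + (y.1 + y.2) = (z.1 + x.2) + (y.1 + y.2) := by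
        calc (x.1 + z.2) + (y.1 + y.2) = (x.1 + y.2) + (y.1 + z.2) := by abel
        _ = (y.1 + x.2) + (z.1 + y.2) := by rw [h1, h2]
        _ = (z.1 + x.2) + (y.1 + y.2) := by abel
      exact add_right_cancel this

private def Groth := Quotient (gsetoid M)

namespace Groth

variable {M}

private def mk (a b : M) : Groth M := Quotient.mk (gsetoid M) (a, b)

private lemma mk_eq {a b c d : M} (h : a + d = c + b) : mk a b = mk c d :=
  Quotient.sound h

private lemma exact {a b c d : M} (h : mk a b = mk c d) : a + d = c + b :=
  Quotient.exact h

instance : Add (Groth M) :=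
  ⟨Quotient.map₂ (fun p q => (p.1 + q.1, p.2 + q.2)) (by
    rintro ⟨a, b⟩ ⟨a', b'⟩ (h1 : a + b' = a' + b) ⟨c, d⟩ ⟨c', d'⟩ (h2 : c + d' = c' + d)
    show (a + c) + (b' + d') = (a' + c') + (b + d)
    calc (a + c) + (b' + d') = (a + b') + (c + d') := by abel
    _ = (a' + b) + (c' + d) := by rw [h1, h2]
    _ = (a' + c') + (b + d) := by abel)⟩

instance : Zero (Groth M) := ⟨mk 0 0⟩

instance : Neg (Groth M) :=
  ⟨Quotient.map (fun p => (p.2, p.1)) (by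
    rintro ⟨a, b⟩ ⟨c, d⟩ (h : a + d = c + b)
    show b + c = d + a
    rw [add_comm, add_comm d a, h.symm])⟩

instance : AddCommGroup (Groth M) where
  add := (· + ·)
  zero := 0
  neg := (- ·)
  nsmul := nsmulRec
  zsmul := zsmulRec
  add_assoc := by
    rintro ⟨⟨a,b⟩⟩ ⟨⟨c,d⟩⟩ ⟨⟨e,f⟩⟩
    exact Quotient.sound (by show (a+c+e) + (b+(d+f)) = (a+(c+e)) + (b+d+f); abel)
  zero_add := by rintro ⟨⟨a,b⟩⟩; exact Quotient.sound (by show 0+a+b = a+(0+b); abel)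
  add_zero := by rintro ⟨⟨a,b⟩⟩; exact Quotient.sound (by show a+0+b = a+(b+0); abel)
  add_comm := by
    rintro ⟨⟨a,b⟩⟩ ⟨⟨c,d⟩⟩
    exact Quotient.sound (by show (a+c)+(d+b) = (c+a)+(b+d); abel)
  neg_add_cancel := by
    rintro ⟨⟨a,b⟩⟩
    exact Quotient.sound (by show (b+a)+0 = 0+(a+b); abel)

private lemma zero_def : (0 : Groth M) = mk 0 0 := rfl

private lemma add_def (a b c d : M) : mk a b + mk c d = mk (a+c) (b+d) := rfl

def iota : M →+ Groth M where
  toFun a := mk a 0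
  map_zero' := zero_def.symm
  map_add' a b := by rw [add_def]; exact mk_eq (by abel)

lemma iota_injective : Function.Injective (iota (M := M)) := by
  intro a b h
  have := exact h
  simpa using this

lemma exists_rep (g : Groth M) : ∃ a b : M, g = iota a - iota b := by
  obtain ⟨⟨a, b⟩, rfl⟩ := Quotient.exists_rep g
  show ∃ a' b' : M, mk a b = iota a' - iota b'
  refine ⟨a, b, ?_⟩
  rw [eq_sub_iff_add_eq]
  show mk a b + mk b 0 = mk a 0
  rw [add_def]; exact mk_eq (by abel)

lemma iota_mem_closure (S : Set M) (hS : AddSubmonoid.closure S = ⊤) (x : M) :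
    iota x ∈ AddSubgroup.closure (iota '' S) := by
  have hle : AddSubmonoid.closure S ≤
      (AddSubgroup.closure (iota '' S)).toAddSubmonoid.comap (iota (M := M)) :=
    AddSubmonoid.closure_le.mpr (fun y hy => AddSubgroup.subset_closure ⟨y, hy, rfl⟩)
  exact hle (hS ▸ AddSubmonoid.mem_top x)

lemma groth_fg [AddMonoid.FG M] : AddGroup.FG (Groth M) := by
  obtain ⟨S, hS, hfin⟩ := AddMonoid.fg_iff.mp ‹_›
  refine AddGroup.fg_iff.mpr ⟨iota '' S, ?_, hfin.image _⟩
  rw [eq_top_iff]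
  rintro g -
  obtain ⟨a, b, rfl⟩ := exists_rep g
  exact sub_mem (iota_mem_closure S hS a) (iota_mem_closure S hS b)

lemma groth_tf (htf : ∀ (k : ℕ) (x y : M), 0 < k → k • x = k • y → x = y) :
    NoZeroSMulDivisors ℤ (Groth M) := by
  constructor
  intro n g h
  rcases eq_or_ne n 0 with hn | hn
  · exact Or.inl hn
  right
  obtain ⟨a, b, rfl⟩ := exists_rep g
  rw [sub_eq_zero]
  have h' : n • iota a = n • iota b := by
    rw [← sub_eq_zero, ← smul_sub, h]
  have h2 : (n.natAbs : ℤ) • iota a = (n.natAbs : ℤ) • iota b := by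
    rcases Int.natAbs_eq n with he | he
    · rw [← he, h']
    · rw [← neg_inj, ← neg_zsmul, ← neg_zsmul, ← he, h']
  have h3 : n.natAbs • iota a = n.natAbs • iota b := by
    rw [natCast_zsmul, natCast_zsmul] at h2; exact h2
  rw [← map_nsmul, ← map_nsmul] at h3
  have := iota_injective h3
  exact congrArg iota (htf n.natAbs a b (Int.natAbs_pos.mpr hn) this)

end Groth


lemma exists_int_eq_mul_den (q : ℚ) (N : ℕ) (h : q.den ∣ N) : ∃ z : ℤ, (z : ℚ) = q * N := by
  obtain ⟨k, hk⟩ := h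
  refine ⟨q.num * k, ?_⟩
  push_cast
  rw [hk]
  push_cast
  rw [← mul_assoc, Rat.mul_den_eq_num]

lemma rat_real_indep {n : ℕ} {J : Type} [Fintype J] (u : Fin n → J → ℚ) (s : Finset (Fin n))
    (hq : ∀ c : Fin n → ℚ, (∀ j, ∑ i ∈ s, c i * u i j = 0) → ∀ i ∈ s, c i = 0)
    (t : Fin n → ℝ) (ht : ∀ j, ∑ i ∈ s, t i * (u i j : ℝ) = 0) : ∀ i ∈ s, t i = 0 := by
  induction s using Finset.strongInduction generalizing u t with
  | _ s ih =>
  rcases Finset.eq_empty_or_nonempty s with rfl | ⟨i0, hi0⟩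
  · intro i hi; exact absurd hi (by simp)
  -- find a pivot coordinate
  have hu0 : ∃ j0, u i0 j0 ≠ 0 := by
    by_contra hcon
    push_neg at hcon
    have := hq (fun i => if i = i0 then 1 else 0) (fun j => by
      rw [Finset.sum_eq_single i0]
      · simp [hcon j]
      · intro i _ hne; simp [hne]
      · intro h; exact absurd hi0 h) i0 hi0
    simp at this
  obtain ⟨j0, hp⟩ := hu0
  set p := u i0 j0 with hpdef
  set s' := s.erase i0 with hs'
  have hss : s' ⊂ s := Finset.erase_ssubset hi0
  set u' : Fin n → J → ℚ := fun i j => u i j - u i j0 / p * u i0 j with hu'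
  -- rational independence for the reduced system
  have hq' : ∀ c : Fin n → ℚ, (∀ j, ∑ i ∈ s', c i * u' i j = 0) → ∀ i ∈ s', c i = 0 := by
    intro c hc i hi
    set A := ∑ i' ∈ s', c i' * u i' j0 with hA
    set cc : Fin n → ℚ := fun i => if i = i0 then -A / p else c i with hcc
    have key : ∀ j, ∑ i ∈ s, cc i * u i j = 0 := by
      intro j
      rw [← Finset.add_sum_erase _ _ hi0, ← hs']
      have h1 : ∑ i ∈ s', cc i * u i j = ∑ i ∈ s', c i * u i j := by
        apply Finset.sum_congr rfl
        intro i' hi'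
        have : i' ≠ i0 := Finset.ne_of_mem_erase hi'
        simp [hcc, this]
      have h2 : ∑ i ∈ s', c i * u i j = A * (u i0 j / p) := by
        have := hc j
        have expand : ∀ i' ∈ s', c i' * u' i' j
            = c i' * u i' j - c i' * u i' j0 * (u i0 j / p) := by
          intro i' _; simp only [hu']; ring
        rw [Finset.sum_congr rfl expand, Finset.sum_sub_distrib, ← Finset.sum_mul, ← hA,
          sub_eq_zero] at this
        exact this
      rw [h1, h2, hcc]
      simp only [if_pos rfl, if_true]
      field_simp
      ring
    have h3 := hq cc key i (Finset.mem_of_mem_erase hi)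
    simp only [hcc, if_neg (Finset.ne_of_mem_erase hi)] at h3
    exact h3
  -- the real relation for the reduced system
  have ht' : ∀ j, ∑ i ∈ s', t i * ((u' i j : ℚ) : ℝ) = 0 := by
    intro j
    have hsj : ∀ j', ∑ i ∈ s', t i * (u i j' : ℝ) = -(t i0 * (u i0 j' : ℝ)) := by
      intro j'
      have := ht j'
      rw [← Finset.add_sum_erase _ _ hi0, ← hs'] at this
      linarith
    have expand : ∀ i' ∈ s', t i' * ((u' i' j : ℚ) : ℝ)
        = t i' * (u i' j : ℝ) - t i' * (u i' j0 : ℝ) * ((u i0 j : ℝ) / (p : ℝ)) := by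
      intro i' _
      simp only [hu']
      push_cast
      ring
    rw [Finset.sum_congr rfl expand, Finset.sum_sub_distrib, ← Finset.sum_mul, hsj j, hsj j0]
    have hpR : (p : ℝ) ≠ 0 := by exact_mod_cast hp
    field_simp
    ring
  have hzero' := ih s' hss u' hq' t ht'
  intro i hi
  by_cases hii : i = i0
  · subst hii
    have := ht j0
    rw [← Finset.add_sum_erase _ _ hi0, ← hs'] at this
    have hrest : ∑ i' ∈ s', t i' * (u i' j0 : ℝ) = 0 :=
      Finset.sum_eq_zero (fun i' hi' => by rw [hzero' i' hi', zero_mul])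
    rw [hrest, add_zero] at this
    have hpR : (p : ℝ) ≠ 0 := by exact_mod_cast hp
    exact (mul_eq_zero.mp this).resolve_right hpR
  · exact hzero' i (Finset.mem_erase.mpr ⟨hii, hi⟩)

/-- Clearing denominators: a nonneg nonzero rational dependency gives a ℕ one. -/
lemma rat_dep_to_nat_dep {n : ℕ} {J : Type} [Fintype J] (u : Fin n → J → ℚ)
    (d : Fin n → ℚ) (hd0 : ∀ i, 0 ≤ d i) (hdrel : ∀ j, ∑ i, d i * u i j = 0)
    (hne : ∃ i, d i ≠ 0) :
    ∃ c : Fin n → ℕ, (∀ j, ∑ i, (c i : ℚ) * u i j = 0) ∧ ∃ i, c i ≠ 0 := by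
  obtain ⟨i1, hi1⟩ := hne
  set N : ℕ := ∏ i, (d i).den with hN
  have hdvd : ∀ i, (d i).den ∣ N := fun i => Finset.dvd_prod_of_mem _ (Finset.mem_univ i)
  have hz : ∀ i, ∃ z : ℤ, (z : ℚ) = d i * N := fun i => exists_int_eq_mul_den _ _ (hdvd i)
  choose z hzeq using hz
  have hNpos : 0 < (N : ℚ) := by
    have h1 : ∀ i ∈ Finset.univ (α := Fin n), 0 < (d i).den := fun i _ => (d i).pos
    exact_mod_cast Nat.cast_pos.mpr (Finset.prod_pos h1)
  have hznn : ∀ i, 0 ≤ z i := by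
    intro i
    have : (0:ℚ) ≤ (z i : ℚ) := by rw [hzeq i]; exact mul_nonneg (hd0 i) hNpos.le
    exact_mod_cast this
  refine ⟨fun i => (z i).toNat, ?_, ⟨i1, ?_⟩⟩
  · intro j
    have h2 : ∑ i, (d i * N) * u i j = 0 := by
      calc ∑ i, (d i * N) * u i j = (∑ i, d i * u i j) * N := by
            rw [Finset.sum_mul]; apply Finset.sum_congr rfl; intros; ring
      _ = 0 := by rw [hdrel j, zero_mul]
    have h3 : ∑ i, ((z i : ℚ)) * u i j = 0 := by
      rw [← h2]; apply Finset.sum_congr rfl; intro i _; rw [hzeq i]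
    calc ∑ i, (((z i).toNat : ℚ)) * u i j = ∑ i, ((z i : ℚ)) * u i j := by
          apply Finset.sum_congr rfl; intro i _
          congr 1
          exact_mod_cast congrArg (fun w : ℤ => ((w : ℚ))) (Int.toNat_of_nonneg (hznn i))
    _ = 0 := h3
  · intro hcon
    have hcon' : (z i1).toNat = 0 := hcon
    have hz1 : z i1 = 0 := by
      have := Int.toNat_of_nonneg (hznn i1); omega
    have : d i1 * N = 0 := by rw [← hzeq i1, hz1, Int.cast_zero]
    exact hi1 ((mul_eq_zero.mp this).resolve_right hNpos.ne')

lemma real_dep_to_nat_dep_aux {n : ℕ} {J : Type} [Fintype J] (u : Fin n → J → ℚ) :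
    ∀ (k : ℕ) (t : Fin n → ℝ), (Finset.univ.filter (fun i => t i ≠ 0)).card ≤ k →
    (∀ i, 0 ≤ t i) → (∀ j, ∑ i, t i * (u i j : ℝ) = 0) → (∃ i, t i ≠ 0) →
    ∃ c : Fin n → ℕ, (∀ j, ∑ i, (c i : ℚ) * u i j = 0) ∧ ∃ i, c i ≠ 0 := by
  classical
  intro k
  induction k with
  | zero =>
    intro t hcard _ _ ⟨i1, hi1⟩
    exfalso
    rw [Nat.le_zero, Finset.card_eq_zero] at hcard
    have : i1 ∈ Finset.univ.filter (fun i => t i ≠ 0) := by simp [hi1]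
    rw [hcard] at this
    exact absurd this (Finset.notMem_empty _)
  | succ k ih =>
    intro t hcard ht0 hrel ⟨i1, hi1⟩
    set s := Finset.univ.filter (fun i => t i ≠ 0) with hs
    have hi1s : i1 ∈ s := by simp [hs, hi1]
    by_cases hq : ∀ c : Fin n → ℚ, (∀ j, ∑ i ∈ s, c i * u i j = 0) → ∀ i ∈ s, c i = 0
    · exfalso
      have hts : ∀ j, ∑ i ∈ s, t i * (u i j : ℝ) = 0 := by
        intro j
        have he : ∑ i ∈ s, t i * (u i j : ℝ) = ∑ i, t i * (u i j : ℝ) :=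
          Finset.sum_subset (Finset.filter_subset _ _) (fun i _ hi => by
            simp only [hs, Finset.mem_filter, Finset.mem_univ, true_and, not_not] at hi
            rw [hi, zero_mul])
        rw [he, hrel j]
      exact hi1 (rat_real_indep u s hq t hts i1 hi1s)
    push_neg at hq
    obtain ⟨c0, hc0rel, i2, hi2s, hi2⟩ := hq
    -- restrict c0 to s, extended by zero
    set c1 : Fin n → ℚ := fun i => if i ∈ s then c0 i else 0 with hc1
    have hc1rel : ∀ j, ∑ i, c1 i * u i j = 0 := by
      intro j
      rw [← hc0rel j, ← Finset.sum_subset (Finset.subset_univ s) (fun i _ hi => by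
        simp [hc1, hi])]
      exact Finset.sum_congr rfl (fun i hi => by simp [hc1, hi])
    have hc1supp : ∀ i, i ∉ s → c1 i = 0 := fun i hi => by simp [hc1, hi]
    have hc1ne : c1 i2 ≠ 0 := by simpa [hc1, hi2s] using hi2
    -- main argument, assuming some positive coordinate
    have main : ∀ c : Fin n → ℚ, (∀ j, ∑ i, c i * u i j = 0) → (∀ i, i ∉ s → c i = 0) →
        (∃ i, 0 < c i) →
        ∃ c' : Fin n → ℕ, (∀ j, ∑ i, (c' i : ℚ) * u i j = 0) ∧ ∃ i, c' i ≠ 0 := by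
      rintro c hcrel hcsupp ⟨ip, hip⟩
      set P := Finset.univ.filter (fun i => 0 < c i) with hP
      have hPne : P.Nonempty := ⟨ip, by simp [hP, hip]⟩
      obtain ⟨im, himP, him⟩ := Finset.exists_min_image P (fun i => t i / (c i : ℝ)) hPne
      have hcim : 0 < c im := by simpa [hP] using himP
      have hcimR : (0:ℝ) < (c im : ℝ) := by exact_mod_cast hcim
      have hims : im ∈ s := by
        by_contra hcon
        exact absurd (hcsupp im hcon) (ne_of_gt hcim)
      have htim : 0 < t im := by
        have : t im ≠ 0 := by simpa [hs] using hims
        exact lt_of_le_of_ne (ht0 im) (Ne.symm this)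
      set ρ : ℝ := t im / (c im : ℝ) with hρ
      have hρpos : 0 < ρ := div_pos htim hcimR
      set t' : Fin n → ℝ := fun i => t i - ρ * (c i : ℝ) with ht'
      have ht'0 : ∀ i, 0 ≤ t' i := by
        intro i
        by_cases hci : 0 < c i
        · have hiP : i ∈ P := by simp [hP, hci]
          have hciR : (0:ℝ) < (c i : ℝ) := by exact_mod_cast hci
          have h2 : ρ * (c i : ℝ) ≤ t i := by
            rw [← le_div_iff₀ hciR]; exact him i hiP
          simp only [ht']; linarith
        · have hciR : (c i : ℝ) ≤ 0 := by exact_mod_cast not_lt.mp hci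
          have : ρ * (c i : ℝ) ≤ 0 := mul_nonpos_of_nonneg_of_nonpos hρpos.le hciR
          simp only [ht']; linarith [ht0 i]
      have hcastrel : ∀ j, ∑ i, (c i : ℝ) * (u i j : ℝ) = 0 := by
        intro j
        have h1 : ((∑ i, c i * u i j : ℚ) : ℝ) = 0 := by rw [hcrel j]; norm_num
        push_cast at h1
        exact h1
      have hrel' : ∀ j, ∑ i, t' i * (u i j : ℝ) = 0 := by
        intro j
        have : ∑ i, t' i * (u i j : ℝ)
            = ∑ i, t i * (u i j : ℝ) - ρ * ∑ i, (c i : ℝ) * (u i j : ℝ) := by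
          rw [Finset.mul_sum, ← Finset.sum_sub_distrib]
          exact Finset.sum_congr rfl (fun i _ => by simp only [ht']; ring)
        rw [this, hrel j, hcastrel j, mul_zero, sub_zero]
      have ht'im : t' im = 0 := by
        simp only [ht', hρ]
        field_simp
        ring
      by_cases ht'z : ∀ i, t' i = 0
      · -- then t = ρ • c, so c is nonneg
        have hcnn : ∀ i, 0 ≤ c i := by
          intro i
          have h1 : t i = ρ * (c i : ℝ) := by
            have := ht'z i; simp only [ht'] at this; linarith
          have h2 : 0 ≤ ρ * (c i : ℝ) := h1 ▸ ht0 i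
          have : (0:ℝ) ≤ (c i : ℝ) := nonneg_of_mul_nonneg_right h2 hρpos
          exact_mod_cast this
        exact rat_dep_to_nat_dep u c hcnn hcrel ⟨im, ne_of_gt hcim⟩
      · push_neg at ht'z
        obtain ⟨i3, hi3⟩ := ht'z
        -- support of t' is strictly smaller
        have hsub : Finset.univ.filter (fun i => t' i ≠ 0) ⊆ s.erase im := by
          intro i hi
          simp only [Finset.mem_filter, Finset.mem_univ, true_and] at hi
          rw [Finset.mem_erase]
          constructor
          · rintro rfl; exact hi ht'im
          · simp only [hs, Finset.mem_filter, Finset.mem_univ, true_and]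
            intro htz
            apply hi
            simp only [ht', htz, zero_sub, neg_eq_zero]
            by_cases hcs : i ∈ s
            · exact absurd htz (by simpa [hs] using hcs)
            · rw [hcsupp i hcs]; simp
        have hcard' : (Finset.univ.filter (fun i => t' i ≠ 0)).card ≤ k := by
          have h1 := Finset.card_le_card hsub
          have h2 : (s.erase im).card = s.card - 1 := Finset.card_erase_of_mem hims
          have h3 : 1 ≤ s.card := Finset.card_pos.mpr ⟨im, hims⟩
          omega
        exact ih t' hcard' ht'0 hrel' ⟨i3, hi3⟩
    -- produce a positive coordinate from c1 or -c1
    by_cases hpos : ∃ i, 0 < c1 i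
    · exact main c1 hc1rel hc1supp hpos
    · push_neg at hpos
      refine main (fun i => -c1 i)
        (fun j => ?_)
        (fun i hi => by show -c1 i = 0; rw [hc1supp i hi, neg_zero])
        ⟨i2, ?_⟩
      · show ∑ i, -c1 i * u i j = 0
        rw [← neg_eq_zero, ← hc1rel j, ← Finset.sum_neg_distrib]
        exact Finset.sum_congr rfl (fun i _ => by ring)
      · show 0 < -c1 i2
        rcases lt_or_eq_of_le (hpos i2) with h | h
        · linarith
        · exact absurd h hc1ne

lemma real_dep_to_nat_dep {n : ℕ} {J : Type} [Fintype J] (u : Fin n → J → ℚ)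
    (t : Fin n → ℝ) (ht0 : ∀ i, 0 ≤ t i)
    (hrel : ∀ j, ∑ i, t i * (u i j : ℝ) = 0) (hne : ∃ i, t i ≠ 0) :
    ∃ c : Fin n → ℕ, (∀ j, ∑ i, (c i : ℚ) * u i j = 0) ∧ ∃ i, c i ≠ 0 := by
  classical
  exact real_dep_to_nat_dep_aux u _ t le_rfl ht0 hrel hne


/-- If the integer vectors `z i` admit no nontrivial ℕ-dependency, then some integer
functional is strictly positive on all of them. -/
lemma exists_pos_int_functional {n : ℕ} {J : Type} [Fintype J] [DecidableEq J]
    (z : Fin n → J → ℤ)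
    (hdep : ∀ c : Fin n → ℕ, (∀ j, ∑ i, (c i : ℚ) * (z i j : ℚ) = 0) → ∀ i, c i = 0) :
    ∃ a : J → ℤ, ∀ i, 0 < ∑ j, z i j * a j := by
  classical
  set u : Fin n → J → ℚ := fun i j => (z i j : ℚ) with hu
  set w : Fin n → (J → ℝ) := fun i j => (z i j : ℝ) with hw
  -- 0 is not in the convex hull of the w i
  have h0 : (0 : J → ℝ) ∉ convexHull ℝ (Set.range w) := by
    intro hmem
    rw [convexHull_range_eq_exists_affineCombination] at hmem
    obtain ⟨s, W, hW0, hW1, hWeq⟩ := hmem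
    rw [Finset.affineCombination_eq_linear_combination s w W hW1] at hWeq
    set t : Fin n → ℝ := fun i => if i ∈ s then W i else 0 with htdef
    have ht0 : ∀ i, 0 ≤ t i := by
      intro i
      simp only [htdef]
      split
      · exact hW0 i ‹_›
      · exact le_refl 0
    have hrel : ∀ j, ∑ i, t i * (u i j : ℝ) = 0 := by
      intro j
      have h1 : (∑ i ∈ s, W i • w i) j = 0 := by rw [hWeq]; rfl
      rw [Finset.sum_apply] at h1
      have h2 : ∑ i, t i * (u i j : ℝ) = ∑ i ∈ s, W i * w i j := by
        rw [← Finset.sum_subset (Finset.subset_univ s) (fun i _ hi => by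
          simp [htdef, hi])]
        apply Finset.sum_congr rfl
        intro i hi
        simp only [htdef, if_pos hi, hu, hw]
        norm_num
      rw [h2, ← h1]
      apply Finset.sum_congr rfl
      intro i _
      simp [Pi.smul_apply, smul_eq_mul]
    have hne : ∃ i, t i ≠ 0 := by
      by_contra hcon
      push_neg at hcon
      have : ∑ i ∈ s, W i = 0 := by
        rw [Finset.sum_congr rfl (fun i hi => ?_), Finset.sum_const_zero]
        have := hcon i
        simpa [htdef, if_pos hi] using this
      rw [hW1] at this
      exact one_ne_zero this
    obtain ⟨c, hcrel, i0, hi0⟩ := real_dep_to_nat_dep u t ht0 hrel hne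
    exact hi0 (hdep c hcrel i0)
  -- separate
  have hconv : Convex ℝ (convexHull ℝ (Set.range w)) := convex_convexHull ℝ _
  have hcomp : IsCompact (convexHull ℝ (Set.range w)) :=
    (Set.finite_range w).isCompact_convexHull ℝ
  obtain ⟨f, ub, hub, hub0⟩ :=
    geometric_hahn_banach_closed_point hconv hcomp.isClosed h0
  rw [map_zero] at hub0
  set F : (J → ℝ) →L[ℝ] ℝ := -f with hF
  set μ : ℝ := -ub with hμ
  have hμpos : 0 < μ := by simp [hμ]; linarith
  have hFw : ∀ i, μ ≤ F (w i) := by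
    intro i
    have := hub (w i) (subset_convexHull ℝ _ (Set.mem_range_self i))
    simp only [hF, ContinuousLinearMap.neg_apply, hμ]
    linarith
  -- coordinates of F
  set d : J → ℝ := fun j => F (fun j' => if j = j' then 1 else 0) with hd
  have hFx : ∀ x : J → ℝ, F x = ∑ j, x j * d j := by
    intro x
    conv_lhs => rw [pi_eq_sum_univ x]
    rw [map_sum]
    apply Finset.sum_congr rfl
    intro j _
    rw [map_smul]
    simp [hd, smul_eq_mul]
  -- rational approximation
  set B : ℝ := 1 + ∑ i, ∑ j, |(z i j : ℝ)| with hB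
  have hB1 : 1 ≤ B := by
    have : (0:ℝ) ≤ ∑ i, ∑ j, |(z i j : ℝ)| :=
      Finset.sum_nonneg (fun i _ => Finset.sum_nonneg (fun j _ => abs_nonneg _))
    simp [hB]; linarith
  have hrow : ∀ i, ∑ j, |(z i j : ℝ)| ≤ B - 1 := by
    intro i
    simp only [hB, add_sub_cancel_left]
    exact Finset.single_le_sum (f := fun i => ∑ j, |(z i j : ℝ)|)
      (fun i _ => Finset.sum_nonneg (fun j _ => abs_nonneg _)) (Finset.mem_univ i)
  set ε : ℝ := μ / B with hε
  have hεpos : 0 < ε := div_pos hμpos (by linarith)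
  have hq : ∀ j : J, ∃ q : ℚ, |d j - q| < ε := fun j => exists_rat_near (d j) hεpos
  choose q hqnear using hq
  have hqpos : ∀ i, 0 < ∑ j, (z i j : ℚ) * q j := by
    intro i
    have key : (0:ℝ) < ∑ j, (z i j : ℝ) * (q j : ℝ) := by
      have e1 : ∑ j, (z i j : ℝ) * (q j : ℝ)
          = F (w i) - ∑ j, (z i j : ℝ) * (d j - q j) := by
        rw [hFx (w i), ← Finset.sum_sub_distrib]
        apply Finset.sum_congr rfl
        intro j _
        simp only [hw]
        ring
      have e2 : |∑ j, (z i j : ℝ) * (d j - q j)| ≤ (B - 1) * ε := by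
        calc |∑ j, (z i j : ℝ) * (d j - q j)| ≤ ∑ j, |(z i j : ℝ) * (d j - q j)| :=
              Finset.abs_sum_le_sum_abs _ _
        _ = ∑ j, |(z i j : ℝ)| * |d j - q j| := by
              apply Finset.sum_congr rfl; intro j _; rw [abs_mul]
        _ ≤ ∑ j, |(z i j : ℝ)| * ε :=
              Finset.sum_le_sum (fun j _ =>
                mul_le_mul_of_nonneg_left (hqnear j).le (abs_nonneg _))
        _ = (∑ j, |(z i j : ℝ)|) * ε := by rw [Finset.sum_mul]
        _ ≤ (B - 1) * ε := mul_le_mul_of_nonneg_right (hrow i) hεpos.le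
      have e3 : (B - 1) * ε < μ := by
        have : (B - 1) * ε = B * ε - ε := by ring
        rw [this]
        have hBε : B * ε = μ := by
          rw [hε]; field_simp
        linarith
      have := hFw i
      rw [e1]
      have habs := abs_le.mp e2
      linarith
    have : ((∑ j, (z i j : ℚ) * q j : ℚ) : ℝ) = ∑ j, (z i j : ℝ) * (q j : ℝ) := by
      push_cast
      rfl
    exact_mod_cast this ▸ key
  -- clear denominators
  set N : ℕ := ∏ j, (q j).den with hN
  have hdvd : ∀ j, (q j).den ∣ N := fun j => Finset.dvd_prod_of_mem _ (Finset.mem_univ j)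
  have ha : ∀ j, ∃ a : ℤ, (a : ℚ) = q j * N := fun j => exists_int_eq_mul_den _ _ (hdvd j)
  choose a haeq using ha
  refine ⟨a, fun i => ?_⟩
  have hNpos : 0 < (N : ℚ) := by
    have h1 : ∀ j ∈ Finset.univ (α := J), 0 < (q j).den := fun j _ => (q j).pos
    exact_mod_cast Nat.cast_pos.mpr (Finset.prod_pos h1)
  have key : (0:ℚ) < ∑ j, (z i j : ℚ) * (a j : ℚ) := by
    have e1 : ∑ j, (z i j : ℚ) * (a j : ℚ) = (∑ j, (z i j : ℚ) * q j) * N := by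
      rw [Finset.sum_mul]
      apply Finset.sum_congr rfl
      intro j _
      rw [haeq j]; ring
    rw [e1]
    exact mul_pos (hqpos i) hNpos
  have : ((0:ℤ):ℚ) < ((∑ j, z i j * a j : ℤ) : ℚ) := by
    push_cast
    exact_mod_cast key
  exact_mod_cast this

lemma sharp_nsmul {M : Type} [AddCancelCommMonoid M]
    (hsharp : ∀ a b : M, a + b = 0 → a = 0 ∧ b = 0)
    (k : ℕ) (x : M) (h : k • x = 0) (hk : k ≠ 0) : x = 0 := by
  obtain ⟨m, rfl⟩ := Nat.exists_eq_succ_of_ne_zero hk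
  rw [succ_nsmul] at h
  exact (hsharp _ _ h).2

lemma sharp_sum {M : Type} [AddCancelCommMonoid M]
    (hsharp : ∀ a b : M, a + b = 0 → a = 0 ∧ b = 0)
    {ι : Type} (s : Finset ι) (f : ι → M) (h : ∑ i ∈ s, f i = 0) : ∀ i ∈ s, f i = 0 := by
  classical
  induction s using Finset.induction_on with
  | empty => intro i hi; exact absurd hi (Finset.notMem_empty _)
  | insert a s hni ih =>
    rw [Finset.sum_insert hni] at h
    obtain ⟨h1, h2⟩ := hsharp _ _ h
    intro i hi
    rcases Finset.mem_insert.mp hi with rfl | hi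
    · exact h1
    · exact ih h2 i hi

/-- Let `M` be a finitely generated, cancellative, sharp commutative monoid (its only unit
is `0`) whose groupification is torsion-free (for a cancellative monoid this means
`k • x = k • y → x = y` for `k > 0`).  Then there is a monoid homomorphism `φ : M → ℕ`
with trivial kernel: `φ x = 0 → x = 0`. -/
theorem sharp_fg_monoid_exists_hom_to_nat (M : Type) [AddCancelCommMonoid M]
    [AddMonoid.FG M]
    (hsharp : ∀ a b : M, a + b = 0 → a = 0 ∧ b = 0)
    (htorsionfree : ∀ (k : ℕ) (x y : M), 0 < k → k • x = k • y → x = y) :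
    ∃ φ : M →+ ℕ, ∀ x : M, φ x = 0 → x = 0 := by
  classical
  -- the finitely generated Grothendieck group, a free ℤ-module
  haveI : AddGroup.FG (Groth M) := Groth.groth_fg (M := M)
  haveI : Module.Finite ℤ (Groth M) := Module.Finite.iff_addGroup_fg.mpr ‹_›
  haveI : NoZeroSMulDivisors ℤ (Groth M) := Groth.groth_tf (M := M) htorsionfree
  haveI : Module.Free ℤ (Groth M) := inferInstance
  set J := Module.Free.ChooseBasisIndex ℤ (Groth M) with hJ
  letI : Fintype J := inferInstance
  letI : DecidableEq J := Classical.decEq J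
  set b := Module.Free.chooseBasis ℤ (Groth M) with hb
  -- a finite generating set avoiding 0
  obtain ⟨S0, hS0, hS0fin⟩ := AddMonoid.fg_iff.mp ‹_›
  set T : Finset M := hS0fin.toFinset.erase 0 with hT
  have hTne : ∀ e ∈ T, e ≠ (0 : M) := fun e he => Finset.ne_of_mem_erase he
  have hTtop : AddSubmonoid.closure (↑T : Set M) = ⊤ := by
    rw [eq_top_iff, ← hS0]
    apply AddSubmonoid.closure_le.mpr
    intro x hx
    by_cases hx0 : x = 0
    · rw [hx0]; exact zero_mem _
    · apply AddSubmonoid.subset_closure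
      simp only [hT, Finset.coe_erase, Set.mem_diff, Set.Finite.coe_toFinset,
        Set.mem_singleton_iff]
      exact ⟨hx, hx0⟩
  set n := T.card with hn
  set gens : Fin n → M := fun i => ((T.equivFin.symm i : ↥T) : M) with hgens
  have hgensT : ∀ i, gens i ∈ T := fun i => (T.equivFin.symm i).2
  have hgens_surj : ∀ e ∈ T, ∃ i, gens i = e := by
    intro e he
    refine ⟨T.equivFin ⟨e, he⟩, ?_⟩
    simp [hgens]
  -- integer coordinate vectors of the generators
  set z : Fin n → J → ℤ := fun i j => b.repr (Groth.iota (gens i)) j with hz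
  -- no nontrivial ℕ-dependency among them
  have hdep : ∀ c : Fin n → ℕ, (∀ j, ∑ i, (c i : ℚ) * (z i j : ℚ) = 0) → ∀ i, c i = 0 := by
    intro c hc i
    by_contra hci
    have hzsum : ∀ j, ∑ i, (c i : ℤ) * z i j = 0 := by
      intro j
      have : ((∑ i, (c i : ℤ) * z i j : ℤ) : ℚ) = 0 := by
        push_cast
        exact_mod_cast hc j
      exact_mod_cast this
    have hG : (∑ i, c i • Groth.iota (gens i)) = 0 := by
      apply b.repr.injective
      rw [map_sum, map_zero]
      ext j
      rw [Finsupp.finset_sum_apply]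
      have : ∀ i ∈ Finset.univ, (b.repr (c i • Groth.iota (gens i))) j = (c i : ℤ) * z i j := by
        intro i _
        rw [map_nsmul]
        simp [hz, nsmul_eq_mul]
      rw [Finset.sum_congr rfl this, hzsum j]
      rfl
    have hM : (∑ i, c i • gens i : M) = 0 := by
      apply Groth.iota_injective
      rw [map_sum, map_zero]
      rw [← hG]
      exact Finset.sum_congr rfl (fun i _ => (map_nsmul _ _ _))
    have := sharp_sum hsharp Finset.univ (fun i => c i • gens i) hM i (Finset.mem_univ i)
    exact hTne _ (hgensT i) (sharp_nsmul hsharp (c i) (gens i) this hci)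
  obtain ⟨a, hapos⟩ := exists_pos_int_functional z hdep
  -- the homomorphism to ℤ
  set ψ : M →+ ℤ :=
    { toFun := fun x => ∑ j, a j * (b.repr (Groth.iota x)) j
      map_zero' := by simp
      map_add' := fun x y => by
        show ∑ j, a j * (b.repr (Groth.iota (x + y))) j = ∑ j, a j * (b.repr (Groth.iota x)) j + ∑ j, a j * (b.repr (Groth.iota y)) j
        rw [(Groth.iota (M := M)).map_add x y, b.repr.map_add]
        simp only [Finsupp.add_apply]
        rw [← Finset.sum_add_distrib]
        exact Finset.sum_congr rfl (fun j _ => by ring) } with hψ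
  have hψgens : ∀ i, 0 < ψ (gens i) := by
    intro i
    have : ψ (gens i) = ∑ j, z i j * a j := by
      show (∑ j, a j * (b.repr (Groth.iota (gens i))) j) = ∑ j, z i j * a j
      exact Finset.sum_congr rfl (fun j _ => by rw [hz]; ring)
    rw [this]
    exact hapos i
  have hψT : ∀ e ∈ T, 0 < ψ e := by
    intro e he
    obtain ⟨i, rfl⟩ := hgens_surj e he
    exact hψgens i
  have hψnn : ∀ x : M, 0 ≤ ψ x := by
    intro x
    have hx : x ∈ AddSubmonoid.closure (↑T : Set M) := hTtop ▸ AddSubmonoid.mem_top x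
    exact AddSubmonoid.closure_induction (motive := fun x _ => 0 ≤ ψ x)
      (fun e he => (hψT e he).le) (by simp)
      (fun x y _ _ hx hy => by show 0 ≤ ψ (x + y); rw [map_add]; omega) hx
  have hker : ∀ x : M, ψ x = 0 → x = 0 := by
    intro x
    have hx : x ∈ AddSubmonoid.closure (↑T : Set M) := hTtop ▸ AddSubmonoid.mem_top x
    exact AddSubmonoid.closure_induction (motive := fun x _ => ψ x = 0 → x = 0)
      (fun e he h => absurd h (ne_of_gt (hψT e he)))
      (fun _ => rfl)
      (fun x y _ _ ihx ihy h => by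
        replace h : ψ (x + y) = 0 := h
        rw [map_add] at h
        have h1 := hψnn x
        have h2 := hψnn y
        rw [ihx (by omega), ihy (by omega), add_zero]) hx
  refine ⟨{ toFun := fun x => (ψ x).toNat
            map_zero' := by simp
            map_add' := fun x y => by
              show (ψ (x + y)).toNat = (ψ x).toNat + (ψ y).toNat
              rw [map_add, Int.toNat_add (hψnn x) (hψnn y)] }, ?_⟩
  intro x hx
  apply hker
  have h1 : ψ x ≤ 0 := by
    have := Int.toNat_eq_zero.mp hx
    exact this
  have h2 := hψnn x
  omega
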